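/- For m > 0, the function ψ(p,k,q) = ω_p + E_{k+q−p} − E_k − ω_q, where E_l = sqrt(|l|²+m²) and ω_l = |l|, has no point (p,k,q) with p ≠ 0 at which all partial derivatives with respect to the components of p and k vanish simultaneously. -/

import Mathlib

set_option maxHeartbeats 1000000


noncomputable def E (m : ℝ) (l : EuclideanSpace ℝ (Fin 3)) : ℝ :=
  Real.sqrt (‖l‖ ^ 2 + m ^ 2)

lemma E_pos {m : ℝ} (hm : 0 < m) (l : EuclideanSpace ℝ (Fin 3)) : 0 < E m l := by
  apply Real.sqrt_pos.2
  positivity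

lemma norm_lt_E {m : ℝ} (hm : 0 < m) (l : EuclideanSpace ℝ (Fin 3)) : ‖l‖ < E m l := by
  have : ‖l‖ = Real.sqrt (‖l‖ ^ 2) := by rw [Real.sqrt_sq (norm_nonneg l)]
  rw [this, E]
  apply Real.sqrt_lt_sqrt (by positivity)
  nlinarith

lemma hasE {m : ℝ} (hm : 0 < m) (l : EuclideanSpace ℝ (Fin 3)) :
    HasFDerivAt (E m) ((E m l)⁻¹ • innerSL ℝ l) l := by
  have h1 : HasFDerivAt (fun x : EuclideanSpace ℝ (Fin 3) => ‖x‖ ^ 2 + m ^ 2)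
      (2 • innerSL ℝ l) l := by
    have := (hasFDerivAt_id l).norm_sq.add_const (m ^ 2)
    simpa using this
  have hne : ‖l‖ ^ 2 + m ^ 2 ≠ 0 := by positivity
  have := h1.sqrt hne
  refine HasFDerivAt.congr_fderiv this ?_
  ext1 v
  have hE := (E_pos hm l).ne'
  simp only [E] at hE ⊢
  simp only [ContinuousLinearMap.smul_apply, smul_eq_mul, nsmul_eq_mul, Nat.cast_ofNat]
  field_simp

lemma hasNorm {p : EuclideanSpace ℝ (Fin 3)} (hp : p ≠ 0) :
    HasFDerivAt (fun x : EuclideanSpace ℝ (Fin 3) => ‖x‖) ((‖p‖)⁻¹ • innerSL ℝ p) p := by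
  have h1 : HasFDerivAt (fun x : EuclideanSpace ℝ (Fin 3) => ‖x‖ ^ 2)
      (2 • innerSL ℝ p) p := by
    have := (hasFDerivAt_id p).norm_sq
    simpa using this
  have hne : ‖p‖ ^ 2 ≠ 0 := by
    have := norm_pos_iff.2 hp; positivity
  have h2 := h1.sqrt hne
  have heq : (fun y : EuclideanSpace ℝ (Fin 3) => Real.sqrt (‖y‖ ^ 2)) = fun y => ‖y‖ := by
    funext y; rw [Real.sqrt_sq (norm_nonneg y)]
  rw [heq] at h2
  refine h2.congr_fderiv ?_
  ext1 v
  have hnp : ‖p‖ ≠ 0 := norm_ne_zero_iff.2 hp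
  rw [Real.sqrt_sq (norm_nonneg p)]
  simp
  field_simp

local notation "V" => EuclideanSpace ℝ (Fin 3)

theorem stmt_7 (m : ℝ) (hm : 0 < m) (q : EuclideanSpace ℝ (Fin 3)) :
    ¬ ∃ p k : EuclideanSpace ℝ (Fin 3), p ≠ 0 ∧
      fderiv ℝ (fun x : EuclideanSpace ℝ (Fin 3) × EuclideanSpace ℝ (Fin 3) =>
        ‖x.1‖ + E m (x.2 + q - x.1) - E m x.2 - ‖q‖) (p, k) = 0 := by
  rintro ⟨p, k, hp, hd⟩
  set l : V := k + q - p with hl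
  -- derivative pieces
  have hfst : HasFDerivAt (fun x : V × V => x.1) (ContinuousLinearMap.fst ℝ V V) (p, k) :=
    hasFDerivAt_fst
  have hsnd : HasFDerivAt (fun x : V × V => x.2) (ContinuousLinearMap.snd ℝ V V) (p, k) :=
    hasFDerivAt_snd
  have hg : HasFDerivAt (fun x : V × V => x.2 + q - x.1)
      (ContinuousLinearMap.snd ℝ V V - ContinuousLinearMap.fst ℝ V V) (p, k) :=
    (hsnd.add_const q).sub hfst
  have hA : HasFDerivAt (fun x : V × V => ‖x.1‖)
      (((‖p‖)⁻¹ • innerSL ℝ p).comp (ContinuousLinearMap.fst ℝ V V)) (p, k) :=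
    (hasNorm (p := p) hp).comp (p, k) hfst
  have hB : HasFDerivAt (fun x : V × V => E m (x.2 + q - x.1))
      (((E m l)⁻¹ • innerSL ℝ l).comp
        (ContinuousLinearMap.snd ℝ V V - ContinuousLinearMap.fst ℝ V V)) (p, k) :=
    HasFDerivAt.comp (g := E m) (p, k) (hasE hm l) hg
  have hC : HasFDerivAt (fun x : V × V => E m x.2)
      (((E m k)⁻¹ • innerSL ℝ k).comp (ContinuousLinearMap.snd ℝ V V)) (p, k) :=
    HasFDerivAt.comp (g := E m) (p, k) (hasE hm k) hsnd
  have htot : HasFDerivAt (fun x : V × V =>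
      ‖x.1‖ + E m (x.2 + q - x.1) - E m x.2 - ‖q‖)
      ((((‖p‖)⁻¹ • innerSL ℝ p).comp (ContinuousLinearMap.fst ℝ V V) +
        ((E m l)⁻¹ • innerSL ℝ l).comp
          (ContinuousLinearMap.snd ℝ V V - ContinuousLinearMap.fst ℝ V V)) -
        ((E m k)⁻¹ • innerSL ℝ k).comp (ContinuousLinearMap.snd ℝ V V)) (p, k) :=
    ((hA.add hB).sub hC).sub_const ‖q‖
  have hD := htot.fderiv
  rw [hd] at hD
  have h0 := congrFun (congrArg DFunLike.coe hD.symm) (p, (0 : V))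
  simp only [ContinuousLinearMap.zero_apply, ContinuousLinearMap.sub_apply,
    ContinuousLinearMap.add_apply, ContinuousLinearMap.coe_comp', Function.comp_apply,
    ContinuousLinearMap.coe_fst', ContinuousLinearMap.coe_snd',
    ContinuousLinearMap.smul_apply, innerSL_apply_apply, smul_eq_mul] at h0
  -- h0 : 0 = ‖p‖⁻¹ * ⟪p,p⟫ + (E m l)⁻¹ * ⟪l, 0 - p⟫ - (E m k)⁻¹ * ⟪k, 0⟫
  have hnp : (0:ℝ) < ‖p‖ := norm_pos_iff.2 hp
  have hEl : (0:ℝ) < E m l := E_pos hm l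
  have hip : (inner ℝ p p : ℝ) = ‖p‖ ^ 2 := real_inner_self_eq_norm_sq p
  have hib : |(inner ℝ l p : ℝ)| ≤ ‖l‖ * ‖p‖ := abs_real_inner_le_norm l p
  have hlE : ‖l‖ < E m l := norm_lt_E hm l
  have hkey : ‖p‖ = (E m l)⁻¹ * (inner ℝ l p : ℝ) := by
    have h1 : (inner ℝ l ((0:V) - p) : ℝ) = -(inner ℝ l p : ℝ) := by
      rw [zero_sub, inner_neg_right]
    rw [h1, inner_zero_right] at h0
    rw [hip] at h0
    have : ‖p‖⁻¹ * ‖p‖ ^ 2 = ‖p‖ := by field_simp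
    nlinarith [h0]
  have h2 : (inner ℝ l p : ℝ) ≤ ‖l‖ * ‖p‖ := le_trans (le_abs_self _) hib
  have h4 : ‖p‖ ≤ (E m l)⁻¹ * (‖l‖ * ‖p‖) := by
    calc ‖p‖ = (E m l)⁻¹ * (inner ℝ l p : ℝ) := hkey
      _ ≤ (E m l)⁻¹ * (‖l‖ * ‖p‖) := mul_le_mul_of_nonneg_left h2 (by positivity)
  have h5 : E m l * ‖p‖ ≤ ‖l‖ * ‖p‖ := by
    calc E m l * ‖p‖ ≤ E m l * ((E m l)⁻¹ * (‖l‖ * ‖p‖)) :=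
          mul_le_mul_of_nonneg_left h4 hEl.le
      _ = ‖l‖ * ‖p‖ := by field_simp
  nlinarith [h5, hnp, hlE]
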